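/- The 3-VFCA rule f(x,y,z) = (x₁y₂ + y₁z₁ + y₁z₃, x₂y₂ + x₃y₂ + y₁z₂, y₃) is complete number-conserving: for any periodic configuration x¹,…,x^L in the simplex Δ, Σᵢ [f(x^{i-1},xⁱ,x^{i+1})]_k = Σᵢ [xⁱ]_k for k = 1,2,3. -/

import Mathlib

lemma shift_sum_aux (L : ℕ) (g : ℤ → ℝ) (hg : ∀ i : ℤ, g (i + L) = g i) :
    ∑ i ∈ Finset.range L, g ((i : ℤ) + 1) = ∑ i ∈ Finset.range L, g (i : ℤ) := by
  have h1 : ∑ i ∈ Finset.range (L+1), g (i:ℤ)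
      = ∑ i ∈ Finset.range L, g (i:ℤ) + g (L:ℤ) :=
    Finset.sum_range_succ (fun n : ℕ => g (n:ℤ)) L
  have h2 : ∑ i ∈ Finset.range (L+1), g (i:ℤ)
      = ∑ i ∈ Finset.range L, g ((i:ℤ)+1) + g 0 := by
    have := Finset.sum_range_succ' (fun n : ℕ => g (n:ℤ)) L
    simpa [Nat.cast_add, Nat.cast_one] using this
  have h0 : g (L:ℤ) = g 0 := by simpa using hg 0
  linarith

theorem stmt_10 (L : ℕ) (hL : 0 < L)
    (f : (Fin 3 → ℝ) → (Fin 3 → ℝ) → (Fin 3 → ℝ) → (Fin 3 → ℝ))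
    (hf : ∀ x y z, f x y z =
      ![x 0 * y 1 + y 0 * z 0 + y 0 * z 2,
        x 1 * y 1 + x 2 * y 1 + y 0 * z 1,
        y 2])
    (x : ℤ → Fin 3 → ℝ) (hper : ∀ i, x (i + L) = x i)
    (hΔ : ∀ i, (∑ m, x i m) = 1 ∧ ∀ m, 0 ≤ x i m) :
    ∀ k, ∑ i ∈ Finset.range L, f (x ((i : ℤ) - 1)) (x (i : ℤ)) (x ((i : ℤ) + 1)) k
      = ∑ i ∈ Finset.range L, x (i : ℤ) k := by
  have hsum : ∀ i : ℤ, x i 0 + x i 1 + x i 2 = 1 := by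
    intro i
    have := (hΔ i).1
    simpa [Fin.sum_univ_three] using this
  set g : ℤ → ℝ := fun i => x (i - 1) 0 * x i 1 with hgdef
  have hgper : ∀ i : ℤ, g (i + L) = g i := by
    intro i
    simp only [hgdef]
    have h1 : x (i + L - 1) = x (i - 1) := by
      have := hper (i - 1); rw [← this]; ring_nf
    rw [h1, hper i]
  have hshift := shift_sum_aux L g hgper
  have hg1 : ∀ i : ℤ, g (i + 1) = x i 0 * x (i + 1) 1 := by
    intro i; simp [hgdef]
  intro k
  fin_cases k
  · have key : ∀ i : ℤ, f (x (i-1)) (x i) (x (i+1)) 0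
        = x i 0 + g i - g (i + 1) := by
      intro i
      rw [hf, hg1]
      simp only [hgdef, Matrix.cons_val_zero]
      linear_combination (x i 0) * (hsum (i + 1))
    calc ∑ i ∈ Finset.range L, f (x ((i:ℤ) - 1)) (x (i:ℤ)) (x ((i:ℤ) + 1)) 0
        = ∑ i ∈ Finset.range L, (x (i:ℤ) 0 + g (i:ℤ) - g ((i:ℤ) + 1)) := by
          exact Finset.sum_congr rfl fun i _ => key i
      _ = ∑ i ∈ Finset.range L, x (i:ℤ) 0 := by
          rw [Finset.sum_sub_distrib, Finset.sum_add_distrib, hshift]; ring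
  · have key : ∀ i : ℤ, f (x (i-1)) (x i) (x (i+1)) 1
        = x i 1 + g (i + 1) - g i := by
      intro i
      rw [hf, hg1]
      simp only [hgdef, Matrix.cons_val_one, Matrix.head_cons, Matrix.cons_val_zero]
      linear_combination (x i 1) * (hsum (i - 1))
    calc ∑ i ∈ Finset.range L, f (x ((i:ℤ) - 1)) (x (i:ℤ)) (x ((i:ℤ) + 1)) 1
        = ∑ i ∈ Finset.range L, (x (i:ℤ) 1 + g ((i:ℤ) + 1) - g (i:ℤ)) := by
          exact Finset.sum_congr rfl fun i _ => key i
      _ = ∑ i ∈ Finset.range L, x (i:ℤ) 1 := by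
          rw [Finset.sum_sub_distrib, Finset.sum_add_distrib, hshift]; ring
  · apply Finset.sum_congr rfl
    intro i _
    rw [hf]
    simp
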